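/- Let Φ_z : ℝ³ → ℝ³ be defined by Φ_z(x,y,z) = (z, b + z(x-c), ż·(x-c) + z·ẋ) with ż = b + z(x-c) and ẋ = -y-z (i.e. (z, ż, z̈) for the Rössler system). Then on the open set {(x,y,z) : z ≠ 0}, Φ_z is injective and its inverse satisfies x = (-b + cX₁ + X₂)/X₁ and y = -X₁ + (-bX₂ - X₁X₃ + X₂²)/X₁². -/

import Mathlib

noncomputable section

/-- Derivative coordinates of z for the Rössler system: Φ_z(x,y,z) = (z, ż, z̈). -/
def PhiZ (b c : ℝ) (p : ℝ × ℝ × ℝ) : ℝ × ℝ × ℝ :=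
  (p.2.2, b + p.2.2 * (p.1 - c),
    (b + p.2.2 * (p.1 - c)) * (p.1 - c) + p.2.2 * (-p.2.1 - p.2.2))

theorem phiZ_injOn (b c : ℝ) :
    Set.InjOn (PhiZ b c) {p : ℝ × ℝ × ℝ | p.2.2 ≠ 0} ∧
    ∀ x y z : ℝ, z ≠ 0 →
      (let X := PhiZ b c (x, y, z)
       x = (-b + c * X.1 + X.2.1) / X.1 ∧
       y = -X.1 + (-b * X.2.1 - X.1 * X.2.2 + X.2.1 ^ 2) / X.1 ^ 2) := by
  have inv : ∀ x y z : ℝ, z ≠ 0 →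
      (let X := PhiZ b c (x, y, z)
       x = (-b + c * X.1 + X.2.1) / X.1 ∧
       y = -X.1 + (-b * X.2.1 - X.1 * X.2.2 + X.2.1 ^ 2) / X.1 ^ 2) := by
    intro x y z hz
    constructor
    · simp only [PhiZ]; field_simp; ring
    · simp only [PhiZ]; field_simp; ring
  refine ⟨?_, inv⟩
  intro p hp q hq heq
  obtain ⟨hx1, hy1⟩ := inv p.1 p.2.1 p.2.2 hp
  obtain ⟨hx2, hy2⟩ := inv q.1 q.2.1 q.2.2 hq
  have hz : p.2.2 = q.2.2 := congrArg Prod.fst heq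
  have h2 := heq
  ext
  · rw [hx1, hx2, show PhiZ b c (p.1, p.2.1, p.2.2) = PhiZ b c p from rfl,
      show PhiZ b c (q.1, q.2.1, q.2.2) = PhiZ b c q from rfl, heq]
  · rw [hy1, hy2, show PhiZ b c (p.1, p.2.1, p.2.2) = PhiZ b c p from rfl,
      show PhiZ b c (q.1, q.2.1, q.2.2) = PhiZ b c q from rfl, heq]
  · exact hz
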